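/- For $w > 0$ with $w \ne 1$ and $\alpha \in (0,1)$, the generalized Kantorovich constant $K(w,\alpha) = \frac{w^{\alpha} - w}{(\alpha-1)(w-1)}\left(\frac{\alpha-1}{\alpha} \cdot \frac{w^{\alpha}-1}{w^{\alpha}-w}\right)^{\alpha}$ satisfies $0 < K(w,\alpha) \le 1$. -/

import Mathlib

lemma kant_key (α b c : ℝ) (hα0 : 0 < α) (hα1 : α < 1) (hb : 0 < b) (hc : 0 < c)
    (h : b + c = 1) : b ^ α * c ^ (1 - α) ≤ α ^ α * (1 - α) ^ (1 - α) := by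
  have h1α : 0 < 1 - α := by linarith
  have H := Real.geom_mean_le_arith_mean2_weighted hα0.le h1α.le
      (div_nonneg hb.le hα0.le) (div_nonneg hc.le h1α.le) (by ring)
  have hr : α * (b / α) + (1 - α) * (c / (1 - α)) = 1 := by
    field_simp
    linarith
  rw [Real.div_rpow hb.le hα0.le, Real.div_rpow hc.le h1α.le, hr] at H
  have hα' : 0 < α ^ α := Real.rpow_pos_of_pos hα0 _
  have h1α' : 0 < (1 - α) ^ (1 - α) := Real.rpow_pos_of_pos h1α _
  calc b ^ α * c ^ (1 - α)
      = (b ^ α / α ^ α * (c ^ (1 - α) / (1 - α) ^ (1 - α))) * (α ^ α * (1 - α) ^ (1 - α)) := by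
        field_simp
    _ ≤ 1 * (α ^ α * (1 - α) ^ (1 - α)) := by
        apply mul_le_mul_of_nonneg_right H (by positivity)
    _ = α ^ α * (1 - α) ^ (1 - α) := one_mul _

theorem gen_kantorovich_mem_Ioc (w α : ℝ) (hw : 0 < w) (hw1 : w ≠ 1)
    (hα0 : 0 < α) (hα1 : α < 1) :
    0 < ((w ^ α - w) / ((α - 1) * (w - 1))) *
        (((α - 1) / α) * ((w ^ α - 1) / (w ^ α - w))) ^ α ∧
    ((w ^ α - w) / ((α - 1) * (w - 1))) *
        (((α - 1) / α) * ((w ^ α - 1) / (w ^ α - w))) ^ α ≤ 1 := by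
  have h1α : 0 < 1 - α := by linarith
  have hw1' : w - 1 ≠ 0 := sub_ne_zero.mpr hw1
  have hα1' : α - 1 ≠ 0 := by intro h; linarith
  have h1α'' : (1 : ℝ) - α ≠ 0 := ne_of_gt h1α
  set a := w ^ α with ha
  have hb : 0 < (a - 1) / (w - 1) ∧ 0 < (w - a) / (w - 1) := by
    rcases lt_or_gt_of_ne hw1 with h | h
    · have ha1 : a < 1 := Real.rpow_lt_one hw.le h hα0
      have haw : w < a := by
        calc w = w ^ (1 : ℝ) := (Real.rpow_one w).symm
          _ < w ^ α := Real.rpow_lt_rpow_of_exponent_gt hw h hα1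
      constructor
      · exact div_pos_iff.mpr (Or.inr ⟨by linarith, by linarith⟩)
      · exact div_pos_iff.mpr (Or.inr ⟨by linarith, by linarith⟩)
    · have ha1 : 1 < a := Real.one_lt_rpow_iff_of_pos hw |>.mpr (Or.inl ⟨h, hα0⟩)
      have haw : a < w := by
        calc w ^ α < w ^ (1 : ℝ) := Real.rpow_lt_rpow_of_exponent_lt h hα1
          _ = w := Real.rpow_one w
      exact ⟨div_pos (by linarith) (by linarith), div_pos (by linarith) (by linarith)⟩
  obtain ⟨hb1, hb2⟩ := hb
  set b := (a - 1) / (w - 1) with hbdef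
  set c := (w - a) / (w - 1) with hcdef
  have hbc : b + c = 1 := by
    rw [hbdef, hcdef, ← add_div, div_eq_one_iff_eq hw1']
    ring
  have haw' : a - w ≠ 0 := by
    intro h0
    have : c = 0 := by rw [hcdef]; rw [show w - a = -(a - w) by ring, h0]; simp
    linarith
  have hwa : w - a ≠ 0 := fun h0 => haw' (by linarith [sub_eq_zero.mp h0])
  have e1 : (a - w) / ((α - 1) * (w - 1)) = c / (1 - α) := by
    rw [hcdef, div_div,
      div_eq_div_iff (mul_ne_zero hα1' hw1') (mul_ne_zero hw1' h1α'')]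
    ring
  have e2 : ((α - 1) / α) * ((a - 1) / (a - w)) = ((1 - α) * b) / (α * c) := by
    rw [div_mul_div_comm, hbdef, hcdef, ← mul_div_assoc, ← mul_div_assoc,
      div_div_div_cancel_right₀ hw1',
      div_eq_div_iff (mul_ne_zero (ne_of_gt hα0) haw') (mul_ne_zero (ne_of_gt hα0) hwa)]
    ring
  rw [e1, e2]
  have hbase : 0 < ((1 - α) * b) / (α * c) := by positivity
  constructor
  · positivity
  · have hsplit : (((1 - α) * b) / (α * c)) ^ α
        = ((1 - α) ^ α * b ^ α) / (α ^ α * c ^ α) := by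
      rw [Real.div_rpow (by positivity) (by positivity),
        Real.mul_rpow h1α.le hb1.le, Real.mul_rpow hα0.le hb2.le]
    rw [hsplit, div_mul_div_comm, div_le_one (by positivity)]
    have key := kant_key α b c hα0 hα1 hb1 hb2 hbc
    set p := c ^ α with hp
    set q := c ^ (1 - α) with hq
    set r := (1 - α) ^ α with hr
    set s := (1 - α) ^ (1 - α) with hs
    have hc1 : c = p * q := by
      rw [hp, hq, ← Real.rpow_add hb2]; norm_num
    have h1 : (1 - α) = r * s := by
      rw [hr, hs, ← Real.rpow_add h1α]; norm_num
    have hpr : 0 ≤ p * r := by positivity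
    calc c * (r * b ^ α)
        = (p * r) * (b ^ α * q) := by rw [hc1]; ring
      _ ≤ (p * r) * (α ^ α * s) := mul_le_mul_of_nonneg_left key hpr
      _ = (1 - α) * (α ^ α * p) := by rw [h1]; ring
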